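/- arXiv:1802.01577 — 3 statements merged into one kernel-verified Lean document; each statement's English description precedes it below -/
import Mathlib

section
/- Let M be a compact connected metric measure space with μ(M)=1, diam M = 1, satisfying Ahlfors regularity (c₁⁻¹ r^d ≤ v(y,r) ≤ c₁ r^d for all y, r∈[0,1]) and Lipschitz volume continuity (|v(y,r₁) − v(y,r₂)| ≤ c₂|r₁ − r₂|). Suppose P_m = {P_j}_{j=1}^m is a partition of M into sets of measure 1/m with diam P_j ≤ c₈ m^{−1/d}. Then for every y ∈ M and r ∈ [0,1], the number K_m(y,r) of parts P_j meeting the sphere Σ(y,r) = {x : θ(x,y) = r} satisfies K_m(y,r) ≤ 4 c₂ c₈ m^{1 − 1/d}. -/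
open MeasureTheory Metric Set
open scoped Classical

/-- The volume of the metric ball `B(y,r)`, with the convention `v(y,r) = 1` for `r ≥ 1`
(since `diam M = 1`, `B(y,r) = M` for `r ≥ 1`); for `r ≤ 0` the ball is empty. -/
noncomputable def vol {M : Type*} [MetricSpace M] [MeasurableSpace M]
    (μ : MeasureTheory.Measure M) (y : M) (r : ℝ) : ℝ :=
  if 1 ≤ r then 1 else (μ (Metric.ball y r)).toReal

/-- the number `K_m(y,r)` of parts of an equal-measure partition with small
diameters meeting the sphere `Σ(y,r)` is at most `4 c₂ c₈ m^{1-1/d}`. -/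
theorem stmt1 {M : Type*} [MetricSpace M] [CompactSpace M] [ConnectedSpace M] [Nonempty M]
    [MeasurableSpace M] (μ : Measure M) [IsProbabilityMeasure μ]
    (hdiam : Metric.diam (Set.univ : Set M) = 1)
    (d c₁ c₂ c₈ : ℝ) (hd : 0 < d) (hc₁ : 0 < c₁) (hc₂ : 0 < c₂) (hc₈ : 0 < c₈)
    -- Condition A (Ahlfors regularity)
    (hA : ∀ y : M, ∀ r ∈ Set.Icc (0:ℝ) 1,
      c₁⁻¹ * r ^ d ≤ vol μ y r ∧ vol μ y r ≤ c₁ * r ^ d)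
    -- Condition B (Lipschitz continuity of the volume in the radius)
    (hB : ∀ y : M, ∀ r₁ r₂ : ℝ, |vol μ y r₁ - vol μ y r₂| ≤ c₂ * |r₁ - r₂|)
    (m : ℕ) (hm : 0 < m) (P : Fin m → Set M)
    (hmeas : ∀ j, MeasurableSet (P j))
    (hdisj : Pairwise (Function.onFun Disjoint P))
    (hcover : (⋃ j, P j) = Set.univ)
    (hsize : ∀ j, μ (P j) = 1 / m)
    (hPdiam : ∀ j, Metric.diam (P j) ≤ c₈ * (m : ℝ) ^ (-(1:ℝ)/d))
    (y : M) (r : ℝ) (hr : r ∈ Set.Icc (0:ℝ) 1) :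
    ((Finset.univ.filter fun j : Fin m =>
        ({x : M | dist x y = r} ∩ P j).Nonempty).card : ℝ)
      ≤ 4 * c₂ * c₈ * (m : ℝ) ^ (1 - 1/d) := by
  have hm' : (0:ℝ) < m := Nat.cast_pos.mpr hm
  set δ := c₈ * (m : ℝ) ^ (-(1:ℝ)/d) with hδdef
  have hδ : 0 < δ := mul_pos hc₈ (Real.rpow_pos_of_pos hm' _)
  set F := Finset.univ.filter fun j : Fin m =>
      ({x : M | dist x y = r} ∩ P j).Nonempty with hF
  set S := Metric.ball y (r + 2*δ) \ Metric.ball y (r - δ) with hS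
  have hsub : ∀ j ∈ F, P j ⊆ S := by
    intro j hj z hz
    obtain ⟨x, hx⟩ := (Finset.mem_filter.mp hj).2
    have hxr : dist x y = r := hx.1
    have hbdd : Bornology.IsBounded (P j) :=
      (isCompact_univ (X := M)).isBounded.subset (Set.subset_univ _)
    have hdzx : dist z x ≤ δ :=
      le_trans (Metric.dist_le_diam_of_mem hbdd hz hx.2) (hPdiam j)
    have ht1 : dist z y ≤ dist z x + dist x y := dist_triangle z x y
    have ht2 : dist x y ≤ dist x z + dist z y := dist_triangle x z y
    rw [dist_comm x z] at ht2
    constructor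
    · simp only [Metric.mem_ball]
      linarith
    · simp only [Metric.mem_ball, not_lt]
      linarith
  set U := ⋃ j ∈ F, P j with hU
  have hUmeas : MeasurableSet U :=
    MeasurableSet.biUnion F.countable_toSet (fun j _ => hmeas j)
  have hUval : μ U = (F.card : ENNReal) * (1 / m : ENNReal) := by
    rw [hU, measure_biUnion_finset (fun i _ j _ hij => hdisj hij) fun j _ => hmeas j]
    simp [hsize, Finset.sum_const, nsmul_eq_mul]
  have hUsub : U ⊆ Metric.ball y (r + 2*δ) :=
    Set.iUnion₂_subset fun j hj => (hsub j hj).trans Set.diff_subset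
  have hsmall : Metric.ball y (r - δ) ⊆ Metric.ball y (r + 2*δ) \ U := by
    intro z hz
    refine ⟨Metric.ball_subset_ball (by linarith) hz, ?_⟩
    intro hzU
    obtain ⟨j, hj, hzj⟩ := Set.mem_iUnion₂.mp hzU
    exact ((hsub j hj) hzj).2 hz
  have hadd : μ U + μ (Metric.ball y (r - δ)) ≤ μ (Metric.ball y (r + 2*δ)) := by
    have hsplit := measure_inter_add_diff (μ := μ) (Metric.ball y (r + 2*δ)) hUmeas
    calc μ U + μ (Metric.ball y (r - δ))
        ≤ μ (Metric.ball y (r + 2*δ) ∩ U) + μ (Metric.ball y (r + 2*δ) \ U) :=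
          add_le_add (measure_mono (Set.subset_inter hUsub Set.Subset.rfl))
            (measure_mono hsmall)
      _ = μ (Metric.ball y (r + 2*δ)) := hsplit
  have hcard : (F.card : ℝ) * (1 / m)
      ≤ (μ (Metric.ball y (r + 2*δ))).toReal - (μ (Metric.ball y (r - δ))).toReal := by
    have haddR : (μ U).toReal + (μ (Metric.ball y (r - δ))).toReal
        ≤ (μ (Metric.ball y (r + 2*δ))).toReal := by
      rw [← ENNReal.toReal_add (measure_ne_top μ _) (measure_ne_top μ _)]
      exact ENNReal.toReal_mono (measure_ne_top μ _) hadd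
    have hUR : (μ U).toReal = (F.card : ℝ) * (1 / m) := by
      rw [hUval, ENNReal.toReal_mul]
      simp
    linarith [hUR ▸ haddR]
  have hvol : (μ (Metric.ball y (r + 2*δ))).toReal - (μ (Metric.ball y (r - δ))).toReal
      ≤ 3 * c₂ * δ := by
    have hub : (μ (Metric.ball y (r+2*δ))).toReal ≤ vol μ y (r+2*δ) := by
      unfold vol
      split_ifs with h
      · have h1 : μ (Metric.ball y (r+2*δ)) ≤ 1 := prob_le_one
        have := ENNReal.toReal_mono ENNReal.one_ne_top h1
        simpa using this
      · exact le_refl _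
    have hlb : vol μ y (r-δ) ≤ (μ (Metric.ball y (r-δ))).toReal := by
      unfold vol
      rw [if_neg (by push_neg; linarith [hr.2])]
    have hBB := hB y (r+2*δ) (r-δ)
    have habs : |r + 2*δ - (r - δ)| = 3*δ := by
      rw [abs_of_nonneg (by linarith)]; ring
    rw [habs] at hBB
    have := abs_le.mp hBB
    nlinarith [this.2]
  have hcard2 : (F.card : ℝ) * (1 / m) ≤ 3 * c₂ * δ := le_trans hcard hvol
  have hfinal : (F.card : ℝ) ≤ 3 * c₂ * δ * m := by
    have := hcard2
    have hmne : (m:ℝ) ≠ 0 := ne_of_gt hm'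
    calc (F.card : ℝ) = (F.card : ℝ) * (1/m) * m := by field_simp
      _ ≤ 3 * c₂ * δ * m := by
          apply mul_le_mul_of_nonneg_right this (le_of_lt hm')
  have hrpow : (m:ℝ) ^ (1 - 1/d) = (m:ℝ) * (m:ℝ) ^ (-(1:ℝ)/d) := by
    rw [neg_div, show (1:ℝ) - 1/d = 1 + (-(1/d)) by ring, Real.rpow_add hm',
      Real.rpow_one]
  have hpos : 0 < c₂ * c₈ * (m : ℝ) ^ (1 - 1/d) :=
    mul_pos (mul_pos hc₂ hc₈) (Real.rpow_pos_of_pos hm' _)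
  calc (F.card : ℝ) ≤ 3 * c₂ * δ * m := hfinal
    _ = 3 * (c₂ * c₈ * (m : ℝ) ^ (1 - 1/d)) := by rw [hrpow, hδdef]; ring
    _ ≤ 4 * c₂ * c₈ * (m : ℝ) ^ (1 - 1/d) := by nlinarith
end

section
/- Let M be a compact connected metric measure space satisfying Conditions A and B, admitting for each large N a partition into N equal-measure parts of diameter ≤ c₈ N^{−1/d}. With the random point distribution X_N as above (one independent uniform point per part), for every y ∈ M, r ∈ [0,1], and 1 ≤ p < ∞: E|L[B(y,r), X_N]|^p ≤ 2^p (p+1)^{p/2} c₉^{p/2} N^{(1/2 − 1/(2d)) p}, where c₉ = 4 c₂ c₈. -/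
open MeasureTheory Metric Set ProbabilityTheory

lemma exp_le_add_exp_sq (x : ℝ) : Real.exp x ≤ x + Real.exp (x ^ 2) := by
  rcases le_or_gt |x| 1 with h | h
  · have h2 := Real.exp_bound h (n := 2) (by norm_num)
    have hs : ∑ m ∈ Finset.range 2, x ^ m / (Nat.factorial m) = 1 + x := by
      simp [Finset.sum_range_succ]
    rw [hs] at h2
    have h3 : Real.exp x ≤ 1 + x + |x| ^ 2 * (3 / (2 * 2)) := by
      have h2' := (abs_sub_le_iff.mp h2).1
      have he : ((Nat.succ 2 : ℕ) : ℝ) / ((Nat.factorial 2 : ℕ) * (2:ℕ)) = 3 / (2 * 2) := by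
        norm_num [Nat.factorial]
      rw [he] at h2'
      linarith
    have h4 : 1 + x ^ 2 ≤ Real.exp (x ^ 2) := by
      have := Real.add_one_le_exp (x ^ 2); linarith
    have h5 : |x| ^ 2 = x ^ 2 := sq_abs x
    nlinarith
  · rcases le_total 0 x with hx | hx
    · have hx1 : 1 < x := by rwa [abs_of_nonneg hx] at h
      have : x ≤ x ^ 2 := by nlinarith
      have := Real.exp_le_exp.mpr this
      linarith
    · have hx1 : x < -1 := by
        rw [abs_of_nonpos hx] at h; linarith
      have h1 : Real.exp x ≤ 1 := Real.exp_le_one_iff.mpr hx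
      have h4 : 1 + x ^ 2 ≤ Real.exp (x ^ 2) := by
        have := Real.add_one_le_exp (x ^ 2); linarith
      nlinarith

lemma rpow_le_pow_mul_exp {t p : ℝ} (ht : 0 ≤ t) (hp : 0 < p) :
    t ^ p ≤ p ^ p * Real.exp (t - p) := by
  rcases eq_or_lt_of_le ht with rfl | ht
  · rw [Real.zero_rpow hp.ne']
    positivity
  · rw [← Real.log_le_log_iff (by positivity) (by positivity), Real.log_rpow ht,
      Real.log_mul (by positivity) (Real.exp_ne_zero _), Real.log_rpow hp, Real.log_exp]
    have h := Real.log_le_sub_one_of_pos (x := t / p) (by positivity)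
    rw [Real.log_div ht.ne' hp.ne'] at h
    have h2 : p * (Real.log t - Real.log p) ≤ p * (t / p - 1) :=
      mul_le_mul_of_nonneg_left h hp.le
    have h3 : p * (t / p - 1) = t - p := by field_simp
    nlinarith

lemma integrable_of_bdd {Ω : Type*} [MeasurableSpace Ω] {Pr : Measure Ω} [IsFiniteMeasure Pr]
    {f : Ω → ℝ} (hf : Measurable f) (C : ℝ) (h : ∀ ω, |f ω| ≤ C) : Integrable f Pr :=
  (integrable_const C).mono' hf.aestronglyMeasurable (Filter.Eventually.of_forall h)

/-- moment bound for the local discrepancy of the random point set: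
`E|L[B(y,r), X_N]|^p ≤ 2^p (p+1)^{p/2} c₉^{p/2} N^{(1/2 - 1/(2d))p}` with `c₉ = 4 c₂ c₈`. -/
theorem stmt8 {M : Type*} [MetricSpace M] [CompactSpace M] [ConnectedSpace M] [Nonempty M]
    [MeasurableSpace M] [BorelSpace M] (μ : Measure M) [IsProbabilityMeasure μ]
    (hdiam : Metric.diam (Set.univ : Set M) = 1)
    (d c₁ c₂ c₈ : ℝ) (hd : 0 < d) (hc₁ : 0 < c₁) (hc₂ : 0 < c₂) (hc₈ : 0 < c₈)
    (hA : ∀ y : M, ∀ r ∈ Set.Icc (0:ℝ) 1,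
      c₁⁻¹ * r ^ d ≤ vol μ y r ∧ vol μ y r ≤ c₁ * r ^ d)
    (hB : ∀ y : M, ∀ r₁ r₂ : ℝ, |vol μ y r₁ - vol μ y r₂| ≤ c₂ * |r₁ - r₂|)
    (N : ℕ) (hN : 0 < N) (P : Fin N → Set M)
    (hmeas : ∀ j, MeasurableSet (P j))
    (hdisj : Pairwise (Function.onFun Disjoint P))
    (hcover : (⋃ j, P j) = Set.univ)
    (hsize : ∀ j, μ (P j) = 1 / N)
    (hPdiam : ∀ j, Metric.diam (P j) ≤ c₈ * (N : ℝ) ^ (-(1:ℝ)/d))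
    {Ω : Type*} [MeasurableSpace Ω] (Pr : Measure Ω) [IsProbabilityMeasure Pr]
    (X : Fin N → Ω → M) (hXmeas : ∀ j, Measurable (X j))
    (hXindep : iIndepFun X Pr)
    (hXlaw : ∀ j, Measure.map (X j) Pr = (N : ENNReal) • μ.restrict (P j))
    (y : M) (r : ℝ) (hr : r ∈ Set.Icc (0:ℝ) 1) (p : ℝ) (hp : 1 ≤ p) :
    ∫ ω, |(∑ j : Fin N, (Metric.ball y r).indicator 1 (X j ω) : ℝ)
            - N * (μ (Metric.ball y r)).toReal| ^ p ∂Pr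
      ≤ 2 ^ p * (p + 1) ^ (p / 2) * (4 * c₂ * c₈) ^ (p / 2)
          * (N : ℝ) ^ ((1/2 - 1/(2*d)) * p) := by
  classical
  have hNpos : (0:ℝ) < N := by exact_mod_cast hN
  have hN0 : (N:ℝ) ≠ 0 := hNpos.ne'
  have hppos : (0:ℝ) < p := lt_of_lt_of_le one_pos hp
  set B := Metric.ball y r with hB_def
  have hBmeas : MeasurableSet B := measurableSet_ball
  set δ : ℝ := c₈ * (N : ℝ) ^ (-(1:ℝ)/d) with hδ_def
  have hδpos : 0 < δ := mul_pos hc₈ (Real.rpow_pos_of_pos hNpos _)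
  have h1N : ((1:ENNReal)/N).toReal = 1/(N:ℝ) := by
    rw [ENNReal.toReal_div]; simp
  set a : Fin N → ℝ := fun j => N * (μ (B ∩ P j)).toReal with ha_def
  set g : Fin N → M → ℝ := fun j m => B.indicator 1 m - a j with hg_def
  set ζ : Fin N → Ω → ℝ := fun j => g j ∘ X j with hζ_def
  have hgmeas : ∀ j, Measurable (g j) :=
    fun j => (measurable_one.indicator hBmeas).sub measurable_const
  have hζmeas : ∀ j, Measurable (ζ j) := fun j => (hgmeas j).comp (hXmeas j)
  have haj : ∀ j, 0 ≤ a j ∧ a j ≤ 1 := by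
    intro j
    constructor
    · exact mul_nonneg hNpos.le ENNReal.toReal_nonneg
    · have h1 : μ (B ∩ P j) ≤ 1/N := by
        rw [← hsize j]; exact measure_mono Set.inter_subset_right
      have h2 : (μ (B ∩ P j)).toReal ≤ 1/(N:ℝ) := by
        rw [← h1N]
        exact ENNReal.toReal_mono (by simp [hN.ne']) h1
      calc a j ≤ (N:ℝ) * (1/(N:ℝ)) := mul_le_mul_of_nonneg_left h2 hNpos.le
        _ = 1 := by field_simp
  have hind01 : ∀ m : M, 0 ≤ B.indicator (1 : M → ℝ) m ∧ B.indicator (1 : M → ℝ) m ≤ 1 := by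
    intro m; by_cases hm : m ∈ B <;> simp [hm]
  have hζ_abs : ∀ j ω, |ζ j ω| ≤ 1 := by
    intro j ω
    have h1 := haj j
    have h2 := hind01 (X j ω)
    simp only [hζ_def, hg_def, Function.comp]
    rw [abs_le]
    constructor <;> linarith [h1.1, h1.2, h2.1, h2.2]
  have hζint : ∀ j, Integrable (ζ j) Pr := fun j => integrable_of_bdd (hζmeas j) 1 (hζ_abs j)
  have hint_ind : ∀ j, Integrable (fun ω => B.indicator (1:M→ℝ) (X j ω)) Pr := by
    intro j
    refine integrable_of_bdd ((measurable_one.indicator hBmeas).comp (hXmeas j)) 1 ?_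
    intro ω
    have := hind01 (X j ω)
    rw [abs_le]; constructor <;> linarith [this.1, this.2]
  have hindint : ∀ j, ∫ ω, B.indicator (1:M→ℝ) (X j ω) ∂Pr = a j := by
    intro j
    have hmap := MeasureTheory.integral_map (φ := X j) (μ := Pr)
      (hXmeas j).aemeasurable
      (f := fun m => B.indicator (1:M→ℝ) m)
      ((measurable_one.indicator hBmeas).aestronglyMeasurable)
    rw [← hmap, hXlaw j, integral_indicator_one hBmeas, measureReal_def, Measure.smul_apply,
      Measure.restrict_apply hBmeas, smul_eq_mul, ENNReal.toReal_mul, ENNReal.toReal_natCast,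
      ha_def]
  have hmean : ∀ j, ∫ ω, ζ j ω ∂Pr = 0 := by
    intro j
    have hζe : (fun ω => ζ j ω) = fun ω => B.indicator (1:M→ℝ) (X j ω) - a j := rfl
    rw [hζe, integral_sub (hint_ind j) (integrable_const _), hindint j, integral_const,
      probReal_univ, smul_eq_mul, one_mul, sub_self]
  -- mgf bound for each summand
  have hmgf_le_exp : ∀ j, ∀ s : ℝ, mgf (ζ j) Pr s ≤ Real.exp (s ^ 2) := by
    intro j s
    have hpt : ∀ ω, Real.exp (s * ζ j ω) ≤ s * ζ j ω + Real.exp (s ^ 2) := by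
      intro ω
      have h1 := exp_le_add_exp_sq (s * ζ j ω)
      have h2 : (s * ζ j ω) ^ 2 ≤ s ^ 2 := by
        have hz := abs_le.mp (hζ_abs j ω)
        have hfac : (0:ℝ) ≤ s^2 * ((1 - ζ j ω) * (1 + ζ j ω)) :=
          mul_nonneg (sq_nonneg s) (mul_nonneg (by linarith [hz.1, hz.2]) (by linarith [hz.1, hz.2]))
        nlinarith [hfac]
      have h3 := Real.exp_le_exp.mpr h2
      linarith
    have hlhs : Integrable (fun ω => Real.exp (s * ζ j ω)) Pr := by
      refine integrable_of_bdd (((hζmeas j).const_mul s).exp) (Real.exp |s|) ?_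
      intro ω
      rw [abs_of_pos (Real.exp_pos _)]
      apply Real.exp_le_exp.mpr
      calc s * ζ j ω ≤ |s * ζ j ω| := le_abs_self _
        _ = |s| * |ζ j ω| := abs_mul _ _
        _ ≤ |s| * 1 := mul_le_mul_of_nonneg_left (hζ_abs j ω) (abs_nonneg s)
        _ = |s| := mul_one _
    have hrhs : Integrable (fun ω => s * ζ j ω + Real.exp (s ^ 2)) Pr :=
      ((hζint j).const_mul s).add (integrable_const _)
    calc mgf (ζ j) Pr s = ∫ ω, Real.exp (s * ζ j ω) ∂Pr := rfl
      _ ≤ ∫ ω, (s * ζ j ω + Real.exp (s ^ 2)) ∂Pr := integral_mono hlhs hrhs hpt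
      _ = s * ∫ ω, ζ j ω ∂Pr + Real.exp (s ^ 2) := by
          rw [integral_add ((hζint j).const_mul s) (integrable_const _), integral_const_mul,
            integral_const, probReal_univ, smul_eq_mul, one_mul]
      _ = Real.exp (s ^ 2) := by rw [hmean j, mul_zero, zero_add]
  -- boundary parts
  set Sb : Finset (Fin N) :=
    Finset.univ.filter (fun j => (P j ∩ B).Nonempty ∧ (P j \ B).Nonempty) with hSb_def
  set K : ℕ := Sb.card with hK_def
  have haeP : ∀ j, ∀ᵐ ω ∂Pr, X j ω ∈ P j := by
    intro j
    have h0 : Pr (X j ⁻¹' (P j)ᶜ) = 0 := by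
      have hm := Measure.map_apply (μ := Pr) (hXmeas j) (hmeas j).compl
      rw [hXlaw j, Measure.smul_apply, Measure.restrict_apply (hmeas j).compl,
        compl_inter_self, measure_empty, smul_zero] at hm
      exact hm.symm
    filter_upwards [measure_eq_zero_iff_ae_notMem.mp h0] with ω hω
    simpa using hω
  have hζ_zero : ∀ j ∉ Sb, ∀ᵐ ω ∂Pr, ζ j ω = 0 := by
    intro j hj
    have hj' : ¬ ((P j ∩ B).Nonempty ∧ (P j \ B).Nonempty) := by
      simpa [hSb_def] using hj
    filter_upwards [haeP j] with ω hω
    rcases not_and_or.mp hj' with hc | hc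
    · have hempty : P j ∩ B = ∅ := not_nonempty_iff_eq_empty.mp hc
      have hnB : X j ω ∉ B := fun hxB =>
        Set.eq_empty_iff_forall_notMem.mp hempty _ ⟨hω, hxB⟩
      have haj0 : a j = 0 := by
        have hBe : B ∩ P j = ∅ := by rw [Set.inter_comm]; exact hempty
        simp [ha_def, hBe]
      simp [hζ_def, hg_def, Function.comp, Set.indicator_of_notMem hnB, haj0]
    · have hsub : P j ⊆ B := by
        rw [← Set.diff_eq_empty]; exact not_nonempty_iff_eq_empty.mp hc
      have haj1 : a j = 1 := by
        have hBP : B ∩ P j = P j := Set.inter_eq_right.mpr hsub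
        rw [ha_def]
        simp only [hBP, hsize j]
        rw [h1N]
        field_simp
      simp [hζ_def, hg_def, Function.comp, Set.indicator_of_mem (hsub hω), haj1]
  have hmgf_one : ∀ j ∉ Sb, ∀ s : ℝ, mgf (ζ j) Pr s = 1 := by
    intro j hj s
    have hcongr : (fun ω => Real.exp (s * ζ j ω)) =ᵐ[Pr] fun _ => 1 := by
      filter_upwards [hζ_zero j hj] with ω hω
      simp [hω]
    calc mgf (ζ j) Pr s = ∫ ω, Real.exp (s * ζ j ω) ∂Pr := rfl
      _ = ∫ _ω, (1:ℝ) ∂Pr := integral_congr_ae hcongr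
      _ = 1 := by simp
  have hindep : iIndepFun ζ Pr := by
    rw [hζ_def]; exact hXindep.comp g hgmeas
  have hmgfS : ∀ s : ℝ, mgf (∑ j, ζ j) Pr s ≤ Real.exp (s ^ 2 * K) := by
    intro s
    rw [hindep.mgf_sum hζmeas Finset.univ]
    have hsplit : ∏ j, mgf (ζ j) Pr s
        = (∏ j ∈ Sb, mgf (ζ j) Pr s) * ∏ j ∈ Sbᶜ, mgf (ζ j) Pr s :=
      (Finset.prod_mul_prod_compl Sb _).symm
    rw [hsplit, Finset.prod_eq_one (fun j hj => hmgf_one j (Finset.mem_compl.mp hj) s), mul_one]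
    calc ∏ j ∈ Sb, mgf (ζ j) Pr s ≤ ∏ _j ∈ Sb, Real.exp (s ^ 2) :=
          Finset.prod_le_prod (fun j _ => mgf_nonneg) (fun j _ => hmgf_le_exp j s)
      _ = Real.exp (s ^ 2) ^ K := by rw [Finset.prod_const]
      _ = Real.exp (s ^ 2 * K) := by rw [mul_comm, Real.exp_nat_mul]
  -- bound on the number of boundary parts
  set K₀ : ℝ := 4 * c₂ * c₈ * (N:ℝ) ^ ((1:ℝ) - 1/d) with hK₀_def
  have hNpow_pos : (0:ℝ) < (N:ℝ) ^ ((1:ℝ) - 1/d) := Real.rpow_pos_of_pos hNpos _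
  have hK₀pos : 0 < K₀ := by
    rw [hK₀_def]; positivity
  have hKle : (K:ℝ) ≤ K₀ := by
    have hPsub : ∀ j ∈ Sb, P j ⊆ ball y (r + δ) \ ball y (r - δ) := by
      intro j hj
      rw [hSb_def, Finset.mem_filter] at hj
      obtain ⟨⟨z, hzP, hzB⟩, ⟨w, hwP, hwB⟩⟩ := hj.2
      intro u hu
      have hbd : Metric.diam (P j) ≤ δ := hPdiam j
      have hdzu : dist u z ≤ δ :=
        le_trans (Metric.dist_le_diam_of_mem isBounded_of_compactSpace hu hzP) hbd
      have hdwu : dist u w ≤ δ :=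
        le_trans (Metric.dist_le_diam_of_mem isBounded_of_compactSpace hu hwP) hbd
      have hz : dist z y < r := Metric.mem_ball.mp hzB
      have hw : r ≤ dist w y := by
        simpa [hB_def, Metric.mem_ball, not_lt] using hwB
      constructor
      · have htri : dist u y ≤ dist u z + dist z y := dist_triangle u z y
        exact Metric.mem_ball.mpr (by linarith)
      · intro hmem
        have h2 : dist u y < r - δ := Metric.mem_ball.mp hmem
        have htri : dist w y ≤ dist w u + dist u y := dist_triangle w u y
        rw [dist_comm w u] at htri
        linarith
    have hμUnion : μ (⋃ j ∈ Sb, P j) = (K : ENNReal) * (1 / N) := by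
      rw [measure_biUnion_finset (fun i _ j _ hij => hdisj hij) (fun j _ => hmeas j)]
      simp only [hsize]
      rw [Finset.sum_const, nsmul_eq_mul, hK_def]
    have hμA : (μ (ball y (r + δ) \ ball y (r - δ))).toReal ≤ 2 * c₂ * δ := by
      have hsub2 : ball y (r - δ) ⊆ ball y (r + δ) := ball_subset_ball (by linarith)
      rw [measure_diff hsub2 measurableSet_ball.nullMeasurableSet (measure_ne_top μ _),
        ENNReal.toReal_sub_of_le (measure_mono hsub2) (measure_ne_top μ _)]
      have hr1 : r - δ < 1 := by
        rcases hr with ⟨hr0, hr1⟩; linarith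
      have hv1 : (μ (ball y (r - δ))).toReal = vol μ y (r - δ) := by
        rw [vol, if_neg (by linarith)]
      have hv2 : (μ (ball y (r + δ))).toReal ≤ vol μ y (r + δ) := by
        rw [vol]; split_ifs with h
        · have h1 : μ (ball y (r + δ)) ≤ 1 := prob_le_one
          have := ENNReal.toReal_mono (by simp) h1
          simpa using this
        · exact le_refl _
      have hB2 := hB y (r + δ) (r - δ)
      have habs : |(r + δ) - (r - δ)| = 2 * δ := by
        rw [abs_of_nonneg (by linarith)]; ring
      rw [habs] at hB2
      have hle : vol μ y (r + δ) - vol μ y (r - δ) ≤ c₂ * (2 * δ) :=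
        le_trans (le_abs_self _) hB2
      have : c₂ * (2 * δ) = 2 * c₂ * δ := by ring
      linarith
    have h1 : μ (⋃ j ∈ Sb, P j) ≤ μ (ball y (r + δ) \ ball y (r - δ)) :=
      measure_mono (Set.iUnion₂_subset hPsub)
    have h2 := ENNReal.toReal_mono (measure_ne_top μ _) h1
    rw [hμUnion] at h2
    have h3 : ((K : ENNReal) * (1/N)).toReal = (K:ℝ) * (1/(N:ℝ)) := by
      rw [ENNReal.toReal_mul, h1N, ENNReal.toReal_natCast]
    rw [h3] at h2
    have hcmp : (K:ℝ) * (1 / N) ≤ 2 * c₂ * δ := le_trans h2 hμA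
    have hKN : (K:ℝ) ≤ (N:ℝ) * (2 * c₂ * δ) := by
      have := mul_le_mul_of_nonneg_left hcmp hNpos.le
      have heq : (N:ℝ) * ((K:ℝ) * (1/N)) = (K:ℝ) := by field_simp
      linarith [heq ▸ this]
    have hNpow : (N:ℝ) * (N:ℝ) ^ (-(1:ℝ)/d) = (N:ℝ) ^ ((1:ℝ) - 1/d) := by
      rw [show (1:ℝ) - 1/d = 1 + (-(1:ℝ)/d) by ring, Real.rpow_add hNpos, Real.rpow_one]
    calc (K:ℝ) ≤ (N:ℝ) * (2 * c₂ * δ) := hKN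
      _ = 2 * c₂ * c₈ * ((N:ℝ) * (N:ℝ) ^ (-(1:ℝ)/d)) := by rw [hδ_def]; ring
      _ = 2 * c₂ * c₈ * (N:ℝ) ^ ((1:ℝ) - 1/d) := by rw [hNpow]
      _ ≤ K₀ := by rw [hK₀_def]; nlinarith
  -- the sum and its properties
  set Sf : Ω → ℝ := ∑ j, ζ j with hSf_def
  have hSfapp : ∀ ω, Sf ω = ∑ j, ζ j ω := by
    intro ω; rw [hSf_def]; simp
  have hSfmeas : Measurable Sf := by
    have : Sf = fun ω => ∑ j, ζ j ω := funext hSfapp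
    rw [this]
    exact Finset.measurable_sum _ (fun j _ => hζmeas j)
  have hSfabs : ∀ ω, |Sf ω| ≤ N := by
    intro ω; rw [hSfapp]
    calc |∑ j, ζ j ω| ≤ ∑ j, |ζ j ω| := Finset.abs_sum_le_sum_abs _ _
      _ ≤ ∑ _j : Fin N, (1:ℝ) := Finset.sum_le_sum (fun j _ => hζ_abs j ω)
      _ = N := by simp
  -- identification with the statement's integrand
  have hsum_a : ∑ j : Fin N, a j = N * (μ B).toReal := by
    have hμB : μ B = ∑ j, μ (B ∩ P j) := by
      have hU : B = ⋃ j, B ∩ P j := by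
        rw [← Set.inter_iUnion, hcover, Set.inter_univ]
      have hdis : Pairwise (Function.onFun Disjoint (fun j => B ∩ P j)) :=
        fun i j hij => (hdisj hij).mono Set.inter_subset_right Set.inter_subset_right
      conv_lhs => rw [hU]
      rw [measure_iUnion hdis (fun j => hBmeas.inter (hmeas j)), tsum_fintype]
    calc ∑ j : Fin N, a j = (N:ℝ) * ∑ j, (μ (B ∩ P j)).toReal := by
          rw [ha_def, Finset.mul_sum]
      _ = (N:ℝ) * (μ B).toReal := by
          rw [hμB, ENNReal.toReal_sum (fun j _ => measure_ne_top μ _)]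
  have hLHSeq : ∀ ω, (∑ j : Fin N, B.indicator (1:M→ℝ) (X j ω)) - N * (μ B).toReal = Sf ω := by
    intro ω
    rw [hSfapp]
    simp only [hζ_def, hg_def, Function.comp]
    rw [Finset.sum_sub_distrib, hsum_a]
  -- optimize the exponential parameter
  set q : ℝ := p / (2 * K₀) with hq_def
  have hqpos : 0 < q := div_pos hppos (by linarith)
  set t : ℝ := q ^ ((1:ℝ)/2) with ht_def
  have htpos : 0 < t := Real.rpow_pos_of_pos hqpos _
  have ht2 : t ^ 2 = q := by
    rw [ht_def, ← Real.rpow_natCast (q ^ ((1:ℝ)/2)) 2, ← Real.rpow_mul hqpos.le]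
    norm_num
  have htp : t ^ p = p ^ (p/2) / (2*K₀) ^ (p/2) := by
    rw [ht_def, ← Real.rpow_mul hqpos.le, show (1:ℝ)/2 * p = p/2 by ring, hq_def,
      Real.div_rpow hppos.le (by linarith)]
  have htppos : 0 < t ^ p := Real.rpow_pos_of_pos htpos p
  -- pointwise bound
  have hpoint : ∀ ω, |Sf ω| ^ p
      ≤ p ^ p * Real.exp (-p) * (t ^ p)⁻¹
        * (Real.exp (t * Sf ω) + Real.exp (-t * Sf ω)) := by
    intro ω
    have h1 : (t * |Sf ω|) ^ p ≤ p ^ p * Real.exp (t * |Sf ω| - p) :=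
      rpow_le_pow_mul_exp (mul_nonneg htpos.le (abs_nonneg _)) hppos
    have h2 : (t * |Sf ω|) ^ p = t ^ p * |Sf ω| ^ p := Real.mul_rpow htpos.le (abs_nonneg _)
    have h3 : Real.exp (t * |Sf ω|) ≤ Real.exp (t * Sf ω) + Real.exp (-t * Sf ω) := by
      rcases abs_cases (Sf ω) with ⟨habs, _⟩ | ⟨habs, _⟩
      · rw [habs]; exact le_add_of_nonneg_right (Real.exp_pos _).le
      · rw [habs, show t * -Sf ω = -t * Sf ω by ring]
        exact le_add_of_nonneg_left (Real.exp_pos _).le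
    have h4 : Real.exp (t * |Sf ω| - p) = Real.exp (-p) * Real.exp (t * |Sf ω|) := by
      rw [← Real.exp_add]; ring_nf
    have h5 : t ^ p * |Sf ω| ^ p
        ≤ p ^ p * Real.exp (-p) * (Real.exp (t * Sf ω) + Real.exp (-t * Sf ω)) := by
      rw [← h2]
      calc (t * |Sf ω|) ^ p ≤ p ^ p * Real.exp (t * |Sf ω| - p) := h1
        _ = p ^ p * Real.exp (-p) * Real.exp (t * |Sf ω|) := by rw [h4]; ring
        _ ≤ _ := mul_le_mul_of_nonneg_left h3 (by positivity)
    calc |Sf ω| ^ p = (t ^ p)⁻¹ * (t ^ p * |Sf ω| ^ p) := by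
          field_simp
      _ ≤ (t ^ p)⁻¹ * (p ^ p * Real.exp (-p) * (Real.exp (t * Sf ω) + Real.exp (-t * Sf ω))) :=
          mul_le_mul_of_nonneg_left h5 (inv_nonneg.mpr htppos.le)
      _ = _ := by ring
  -- integrability
  have hintLHS : Integrable (fun ω => |Sf ω| ^ p) Pr := by
    refine integrable_of_bdd ((Real.continuous_rpow_const hppos.le).measurable.comp hSfmeas.abs)
      ((N:ℝ) ^ p) ?_
    intro ω
    rw [abs_of_nonneg (Real.rpow_nonneg (abs_nonneg _) p)]
    exact Real.rpow_le_rpow (abs_nonneg _) (hSfabs ω) hppos.le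
  have hexp_int : ∀ s : ℝ, Integrable (fun ω => Real.exp (s * Sf ω)) Pr := by
    intro s
    refine integrable_of_bdd ((hSfmeas.const_mul s).exp) (Real.exp (|s| * N)) ?_
    intro ω
    rw [abs_of_pos (Real.exp_pos _)]
    apply Real.exp_le_exp.mpr
    calc s * Sf ω ≤ |s * Sf ω| := le_abs_self _
      _ = |s| * |Sf ω| := abs_mul _ _
      _ ≤ |s| * N := mul_le_mul_of_nonneg_left (hSfabs ω) (abs_nonneg _)
  have hexp_int' : Integrable (fun ω => Real.exp (-t * Sf ω)) Pr := hexp_int (-t)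
  -- main integral bound
  have hintegral_le : ∫ ω, |Sf ω| ^ p ∂Pr
      ≤ p ^ p * Real.exp (-p) * (t ^ p)⁻¹ * (mgf Sf Pr t + mgf Sf Pr (-t)) := by
    have hstep : ∫ ω, |Sf ω| ^ p ∂Pr
        ≤ ∫ ω, p ^ p * Real.exp (-p) * (t ^ p)⁻¹
            * (Real.exp (t * Sf ω) + Real.exp (-t * Sf ω)) ∂Pr :=
      integral_mono hintLHS (((hexp_int t).add hexp_int').const_mul _) hpoint
    refine le_trans hstep (le_of_eq ?_)
    rw [integral_const_mul, integral_add (hexp_int t) hexp_int']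
    congr 1
  have hmgf_bound : ∀ s : ℝ, mgf Sf Pr s ≤ Real.exp (s ^ 2 * K) := by
    intro s
    rw [hSf_def]
    exact hmgfS s
  have hqK : ∀ s : ℝ, s ^ 2 = q → Real.exp (s ^ 2 * K) ≤ Real.exp (p/2) := by
    intro s hs
    apply Real.exp_le_exp.mpr
    rw [hs]
    calc q * K ≤ q * K₀ := mul_le_mul_of_nonneg_left hKle hqpos.le
      _ = p/2 := by rw [hq_def]; field_simp
  have hmgf_t : mgf Sf Pr t ≤ Real.exp (p/2) :=
    le_trans (hmgf_bound t) (hqK t ht2)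
  have hmgf_t' : mgf Sf Pr (-t) ≤ Real.exp (p/2) :=
    le_trans (hmgf_bound (-t)) (hqK (-t) (by rw [neg_sq]; exact ht2))
  -- final numeric inequality
  have hnum : 2 * (2*p) ^ (p/2) * Real.exp (-(p/2)) ≤ 2 ^ p * (p+1) ^ (p/2) := by
    have h2p : (2:ℝ) ≤ 2 ^ p := by
      calc (2:ℝ) = 2 ^ (1:ℝ) := (Real.rpow_one 2).symm
        _ ≤ 2 ^ p := Real.rpow_le_rpow_of_exponent_le one_le_two hp
    have he : (2:ℝ) ≤ Real.exp 1 := by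
      have := Real.add_one_le_exp 1; linarith
    have hbase : 2*p ≤ (p+1) * Real.exp 1 := by
      have h1 : (p+1)*2 ≤ (p+1)*Real.exp 1 := mul_le_mul_of_nonneg_left he (by linarith)
      linarith
    have h3 : (2*p) ^ (p/2) ≤ ((p+1) * Real.exp 1) ^ (p/2) :=
      Real.rpow_le_rpow (by linarith) hbase (by positivity)
    have h4 : ((p+1) * Real.exp 1) ^ (p/2) = (p+1) ^ (p/2) * Real.exp (p/2) := by
      rw [Real.mul_rpow (by linarith) (Real.exp_pos 1).le, Real.exp_one_rpow]
    have h5 : 2 * (2*p) ^ (p/2) ≤ 2 ^ p * ((p+1) ^ (p/2) * Real.exp (p/2)) := by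
      rw [← h4]
      exact mul_le_mul h2p h3 (by positivity) (by positivity)
    rw [Real.exp_neg, mul_inv_le_iff₀' (Real.exp_pos _)]
    calc 2 * (2*p) ^ (p/2) ≤ 2 ^ p * ((p+1) ^ (p/2) * Real.exp (p/2)) := h5
      _ = Real.exp (p/2) * (2 ^ p * (p+1) ^ (p/2)) := by ring
  -- algebraic simplification of the bound
  have halg : p ^ p * Real.exp (-p) * (t ^ p)⁻¹ * (Real.exp (p/2) + Real.exp (p/2))
      = 2 * (2*p) ^ (p/2) * Real.exp (-(p/2)) * K₀ ^ (p/2) := by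
    have hpp2 : (0:ℝ) < p ^ (p/2) := Real.rpow_pos_of_pos hppos _
    have e1 : p ^ p * (p ^ (p/2))⁻¹ = p ^ (p/2) := by
      rw [← Real.rpow_neg hppos.le, ← Real.rpow_add hppos]
      congr 1; ring
    have e2 : Real.exp (-p) * Real.exp (p/2) = Real.exp (-(p/2)) := by
      rw [← Real.exp_add]; congr 1; ring
    have e3 : ((2:ℝ)*K₀) ^ (p/2) = 2 ^ (p/2) * K₀ ^ (p/2) :=
      Real.mul_rpow (by norm_num) hK₀pos.le
    have e4 : ((2:ℝ)*p) ^ (p/2) = 2 ^ (p/2) * p ^ (p/2) :=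
      Real.mul_rpow (by norm_num) hppos.le
    calc p ^ p * Real.exp (-p) * (t ^ p)⁻¹ * (Real.exp (p/2) + Real.exp (p/2))
        = 2 * (p ^ p * (p ^ (p/2))⁻¹) * (Real.exp (-p) * Real.exp (p/2))
            * ((2:ℝ)*K₀) ^ (p/2) := by
          rw [htp, inv_div, div_eq_mul_inv]; ring
      _ = 2 * p ^ (p/2) * Real.exp (-(p/2)) * (2 ^ (p/2) * K₀ ^ (p/2)) := by
          rw [e1, e2, e3]
      _ = 2 * (2 ^ (p/2) * p ^ (p/2)) * Real.exp (-(p/2)) * K₀ ^ (p/2) := by ring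
      _ = 2 * (2*p) ^ (p/2) * Real.exp (-(p/2)) * K₀ ^ (p/2) := by rw [← e4]
  have hK₀pow : K₀ ^ (p/2) = (4*c₂*c₈) ^ (p/2) * (N:ℝ) ^ ((1/2 - 1/(2*d)) * p) := by
    rw [hK₀_def, Real.mul_rpow (by positivity) hNpow_pos.le, ← Real.rpow_mul (Nat.cast_nonneg N)]
    congr 1
    ring
  -- put everything together
  have hfinal0 : (fun ω => |(∑ j : Fin N, B.indicator (1:M→ℝ) (X j ω)) - N * (μ B).toReal| ^ p)
      = fun ω => |Sf ω| ^ p := by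
    funext ω
    rw [hLHSeq ω]
  calc ∫ ω, |(∑ j : Fin N, B.indicator (1:M→ℝ) (X j ω)) - N * (μ B).toReal| ^ p ∂Pr
      = ∫ ω, |Sf ω| ^ p ∂Pr := by rw [hfinal0]
    _ ≤ p ^ p * Real.exp (-p) * (t ^ p)⁻¹ * (mgf Sf Pr t + mgf Sf Pr (-t)) := hintegral_le
    _ ≤ p ^ p * Real.exp (-p) * (t ^ p)⁻¹ * (Real.exp (p/2) + Real.exp (p/2)) := by
        apply mul_le_mul_of_nonneg_left (add_le_add hmgf_t hmgf_t') (by positivity)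
    _ = 2 * (2*p) ^ (p/2) * Real.exp (-(p/2)) * K₀ ^ (p/2) := halg
    _ ≤ 2 ^ p * (p+1) ^ (p/2) * K₀ ^ (p/2) :=
        mul_le_mul_of_nonneg_right hnum (Real.rpow_nonneg hK₀pos.le _)
    _ = 2 ^ p * (p + 1) ^ (p / 2) * (4 * c₂ * c₈) ^ (p / 2)
          * (N : ℝ) ^ ((1/2 - 1/(2*d)) * p) := by
        rw [hK₀pow]; ring
end

section
/- (Proposition 1.2, a priori estimate) Let M satisfy the assumptions of Theorem 1.1, admitting equal-measure partitions into m parts of diameter ≤ c₈ m^{−1/d} for all m ≥ c₅. Then for any N-point set D_N ⊂ M, any p > 1, and any integer m ≥ c₅: L_∞[D_N] ≤ 2 m^{2/p} L_p[ξ₀, D_N] + c₄ N m^{−1/d}, where ξ₀ is Lebesgue measure on [0,1], L_∞[D_N] = sup_{y,r} |L[B(y,r), D_N]|, and c₄ = 4 c₂ c₈. -/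
open MeasureTheory Metric Set

set_option linter.unusedSectionVars false
set_option maxHeartbeats 1000000

/-- The local discrepancy `L[B(y,r), D] = #(B(y,r) ∩ D) - N v(y,r)` of an `N`-point set. -/
noncomputable def locDisc {M : Type*} [MetricSpace M] [MeasurableSpace M]
    (μ : MeasureTheory.Measure M) {N : ℕ} (D : Fin N → M) (y : M) (r : ℝ) : ℝ :=
  (∑ i : Fin N, (Metric.ball y r).indicator 1 (D i) : ℝ) - N * vol μ y r

section aux
variable {M : Type*} [MetricSpace M] [MeasurableSpace M] [BorelSpace M]
  (μ : Measure M) [IsProbabilityMeasure μ]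

lemma vol_nonneg (y : M) (r : ℝ) : 0 ≤ vol μ y r := by
  unfold vol; split_ifs <;> positivity

lemma vol_le_one (y : M) (r : ℝ) : vol μ y r ≤ 1 := by
  unfold vol; split_ifs with h
  · exact le_rfl
  · exact ENNReal.toReal_le_of_le_ofReal zero_le_one (by simpa using prob_le_one)

lemma vol_zero (y : M) : vol μ y 0 = 0 := by
  unfold vol; rw [if_neg (by norm_num), Metric.ball_zero, measure_empty]; simp

lemma vol_one (y : M) : vol μ y 1 = 1 := by
  unfold vol; rw [if_pos le_rfl]

lemma vol_mono_center {y y' : M} {ε : ℝ} (r : ℝ) (hε : 0 ≤ ε) (h : dist y' y ≤ ε) :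
    vol μ y' r ≤ vol μ y (r + ε) := by
  unfold vol
  split_ifs with h1 h2 h2
  · exact le_rfl
  · exact absurd (le_trans h1 (by linarith)) h2
  · exact ENNReal.toReal_le_of_le_ofReal zero_le_one (by simpa using prob_le_one)
  · refine ENNReal.toReal_mono (measure_ne_top μ _) (measure_mono fun z hz => ?_)
    rw [Metric.mem_ball] at *
    calc dist z y ≤ dist z y' + dist y' y := dist_triangle _ _ _
      _ < r + ε := by linarith

variable [SecondCountableTopology M]

lemma measurable_vol2 : Measurable (fun q : M × ℝ => vol μ q.1 q.2) := by
  have hS : MeasurableSet {q : (M × ℝ) × M | dist q.2 q.1.1 < q.1.2} :=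
    (isOpen_lt (continuous_snd.dist (continuous_fst.fst))
      (continuous_fst.snd)).measurableSet
  have h1 : Measurable fun q : M × ℝ =>
      μ (Prod.mk q ⁻¹' {q : (M × ℝ) × M | dist q.2 q.1.1 < q.1.2}) :=
    measurable_measure_prodMk_left hS
  have h2 : (fun q : M × ℝ => μ (Metric.ball q.1 q.2)) = fun q : M × ℝ =>
      μ (Prod.mk q ⁻¹' {q : (M × ℝ) × M | dist q.2 q.1.1 < q.1.2}) := by
    funext q; rfl
  unfold vol
  exact Measurable.ite (measurableSet_le measurable_const measurable_snd)
    measurable_const (ENNReal.measurable_toReal.comp (h2 ▸ h1))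

lemma measurable_locDisc2 {N : ℕ} (D : Fin N → M) :
    Measurable (fun q : M × ℝ => locDisc μ D q.1 q.2) := by
  unfold locDisc
  apply Measurable.sub
  · apply Finset.measurable_sum
    intro i _
    classical
    have : (fun q : M × ℝ => (Metric.ball q.1 q.2).indicator (1 : M → ℝ) (D i))
        = fun q : M × ℝ => if dist (D i) q.1 < q.2 then (1:ℝ) else 0 := by
      funext q; rw [Set.indicator_apply]; simp [Metric.mem_ball]
    rw [this]
    exact Measurable.ite
      (isOpen_lt (continuous_const.dist continuous_fst) continuous_snd).measurableSet
      measurable_const measurable_const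
  · exact measurable_const.mul (measurable_vol2 μ)

lemma measurable_F2 {N : ℕ} (D : Fin N → M) (p : ℝ) (hp : 0 ≤ p) :
    Measurable (fun q : M × ℝ => |locDisc μ D q.1 q.2| ^ p) :=
  (Real.continuous_rpow_const hp).measurable.comp (measurable_locDisc2 μ D).abs

end aux

lemma half_le_m_eps {M : Type*} [MetricSpace M] [CompactSpace M] [ConnectedSpace M] [Nonempty M]
    (hdiam : Metric.diam (univ : Set M) = 1) {m : ℕ} {ε : ℝ} (hε : 0 ≤ ε)
    (P : Fin m → Set M) (hPcover : (⋃ j, P j) = univ) (hPdiam : ∀ j, Metric.diam (P j) ≤ ε) :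
    1/2 ≤ m * ε := by
  obtain ⟨x₀, x₁, hx⟩ : ∃ x₀ x₁ : M, 1/2 < dist x₀ x₁ := by
    by_contra h; push_neg at h
    have h2 : Metric.diam (univ : Set M) ≤ 1/2 :=
      Metric.diam_le_of_forall_dist_le (by norm_num) (fun x _ y _ => h x y)
    rw [hdiam] at h2; norm_num at h2
  set f : M → ℝ := fun x => dist x₀ x with hf
  have hlip : LipschitzWith 1 f := LipschitzWith.dist_right x₀
  have himg : Icc 0 (dist x₀ x₁) ⊆ f '' univ := by
    have hconn : IsPreconnected (f '' univ) :=
      isPreconnected_univ.image f (hlip.continuous.continuousOn)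
    have h0 : (0:ℝ) ∈ f '' univ := ⟨x₀, trivial, by simp [hf]⟩
    have h1 : dist x₀ x₁ ∈ f '' univ := ⟨x₁, trivial, rfl⟩
    exact hconn.Icc_subset h0 h1
  have hEN : ENNReal.ofReal (dist x₀ x₁) ≤ m * ENNReal.ofReal ε := by
    calc ENNReal.ofReal (dist x₀ x₁) = volume (Icc 0 (dist x₀ x₁)) := by
          rw [Real.volume_Icc]; simp
      _ ≤ volume (f '' univ) := measure_mono himg
      _ = volume (⋃ j, f '' P j) := by rw [← image_iUnion, hPcover]
      _ ≤ ∑' j, volume (f '' P j) := measure_iUnion_le _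
      _ ≤ ∑' _j : Fin m, ENNReal.ofReal ε := by
          refine ENNReal.tsum_le_tsum fun j => ?_
          refine (Real.volume_le_diam _).trans (le_trans (hlip.ediam_image_le _) ?_)
          have hd1 : Metric.ediam (P j) ≤ ENNReal.ofReal ε :=
            Metric.ediam_le_of_forall_dist_le fun x hx' y hy' =>
              le_trans (Metric.dist_le_diam_of_mem
                ((isCompact_univ.isBounded).subset (subset_univ _)) hx' hy') (hPdiam j)
          simpa using hd1
      _ = m * ENNReal.ofReal ε := by simp [tsum_fintype, Finset.sum_const]
  have hms : (m : ENNReal) * ENNReal.ofReal ε = ENNReal.ofReal (m * ε) := by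
    rw [ENNReal.ofReal_mul (by positivity), ENNReal.ofReal_natCast]
  rw [hms] at hEN
  have h3 : ENNReal.ofReal (1/2) ≤ ENNReal.ofReal (m*ε) :=
    le_trans (ENNReal.ofReal_le_ofReal hx.le) hEN
  exact (ENNReal.ofReal_le_ofReal_iff (by positivity)).mp h3

/-- Proposition 1.2, a priori estimate: for any `N`-point set `D_N`,
`L_∞[D_N] ≤ 2 m^{2/p} L_p[ξ₀, D_N] + c₄ N m^{-1/d}` with `c₄ = 4 c₂ c₈`, for every
`p > 1` and integer `m ≥ c₅`. -/
theorem stmt10 {M : Type*} [MetricSpace M] [CompactSpace M] [ConnectedSpace M] [Nonempty M]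
    [MeasurableSpace M] [BorelSpace M] (μ : Measure M) [IsProbabilityMeasure μ]
    (hdiam : Metric.diam (Set.univ : Set M) = 1)
    (d c₁ c₂ c₈ : ℝ) (hd : 0 < d) (hc₁ : 0 < c₁) (hc₂ : 0 < c₂) (hc₈ : 0 < c₈)
    (hA : ∀ y : M, ∀ r ∈ Set.Icc (0:ℝ) 1,
      c₁⁻¹ * r ^ d ≤ vol μ y r ∧ vol μ y r ≤ c₁ * r ^ d)
    (hB : ∀ y : M, ∀ r₁ r₂ : ℝ, |vol μ y r₁ - vol μ y r₂| ≤ c₂ * |r₁ - r₂|)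
    (c₅ : ℕ)
    (hpart : ∀ m : ℕ, c₅ ≤ m → ∃ P : Fin m → Set M,
      (∀ j, MeasurableSet (P j)) ∧ Pairwise (Function.onFun Disjoint P) ∧
      (⋃ j, P j) = Set.univ ∧ (∀ j, μ (P j) = 1 / m) ∧
      (∀ j, Metric.diam (P j) ≤ c₈ * (m : ℝ) ^ (-(1:ℝ)/d)))
    (N : ℕ) (D : Fin N → M) (p : ℝ) (hp : 1 < p) (m : ℕ) (hm : c₅ ≤ m) (hm0 : 0 < m) :
    ∀ y : M, ∀ r ∈ Set.Icc (0:ℝ) 1,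
      |locDisc μ D y r|
        ≤ 2 * (m : ℝ) ^ (2/p) *
            (∫ y', (∫ r' in Set.Icc (0:ℝ) 1, |locDisc μ D y' r'| ^ p) ∂μ) ^ (1/p)
          + 4 * c₂ * c₈ * N * (m : ℝ) ^ (-(1:ℝ)/d) := by
  haveI : SecondCountableTopology M := by
    haveI : TopologicalSpace.SeparableSpace M :=
      TopologicalSpace.isSeparable_univ_iff.mp isCompact_univ.isSeparable
    exact UniformSpace.secondCountable_of_separable M
  intro y r hr
  obtain ⟨hr0, hr1⟩ := hr
  obtain ⟨P, hPmeas, _hPdisj, hPcover, hPvol, hPdiam⟩ := hpart m hm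
  set ε : ℝ := c₈ * (m : ℝ) ^ (-(1:ℝ)/d) with hεdef
  have hε0 : 0 < ε := mul_pos hc₈ (Real.rpow_pos_of_pos (Nat.cast_pos.mpr hm0) _)
  have hhalf : (1:ℝ)/2 ≤ m * ε := half_le_m_eps hdiam hε0.le P hPcover hPdiam
  set A := (∫ y', (∫ r' in Set.Icc (0:ℝ) 1, |locDisc μ D y' r'| ^ p) ∂μ) with hA
  have hp0 : (0:ℝ) < p := lt_trans one_pos hp
  have hFms : Measurable (fun q : M × ℝ => |locDisc μ D q.1 q.2| ^ p) :=
    measurable_F2 μ D p hp0.le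
  have hFnn : ∀ q : M × ℝ, 0 ≤ |locDisc μ D q.1 q.2| ^ p :=
    fun q => Real.rpow_nonneg (abs_nonneg _) _
  -- counting function facts
  have cnt_nonneg : ∀ (y' : M) (r' : ℝ),
      0 ≤ ∑ i : Fin N, (ball y' r').indicator (1:M→ℝ) (D i) := fun y' r' =>
    Finset.sum_nonneg fun i _ => Set.indicator_nonneg (fun _ _ => zero_le_one) _
  have cnt_le : ∀ (y' : M) (r' : ℝ),
      (∑ i : Fin N, (ball y' r').indicator (1:M→ℝ) (D i)) ≤ N := by
    intro y' r'
    calc (∑ i : Fin N, (ball y' r').indicator (1:M→ℝ) (D i)) ≤ ∑ _i : Fin N, (1:ℝ) :=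
          Finset.sum_le_sum fun i _ =>
            Set.indicator_apply_le' (fun _ => le_rfl) (fun _ => zero_le_one)
      _ = N := by simp
  have cnt_mono : ∀ (y₁ y₂ : M) (r₁ r₂ : ℝ), r₁ + dist y₁ y₂ ≤ r₂ →
      (∑ i : Fin N, (ball y₁ r₁).indicator (1:M→ℝ) (D i)) ≤
        ∑ i : Fin N, (ball y₂ r₂).indicator (1:M→ℝ) (D i) := by
    intro y₁ y₂ r₁ r₂ h
    refine Finset.sum_le_sum fun i _ => Set.indicator_le_indicator_apply_of_subset ?_ zero_le_one
    intro z hz; rw [Metric.mem_ball] at *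
    calc dist z y₂ ≤ dist z y₁ + dist y₁ y₂ := dist_triangle _ _ _
      _ < r₁ + dist y₁ y₂ := by linarith
      _ ≤ r₂ := h
  have hLbd : ∀ (y' : M) (r' : ℝ), |locDisc μ D y' r'| ≤ (N:ℝ) := by
    intro y' r'; rw [abs_le]; unfold locDisc
    constructor
    · have h1 : (N:ℝ) * vol μ y' r' ≤ (N:ℝ) * 1 :=
        mul_le_mul_of_nonneg_left (vol_le_one μ y' r') (Nat.cast_nonneg N)
      have h2 := cnt_nonneg y' r'
      simp only [mul_one] at h1; linarith
    · have h2 : 0 ≤ (N:ℝ) * vol μ y' r' :=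
        mul_nonneg (Nat.cast_nonneg N) (vol_nonneg μ y' r')
      linarith [cnt_le y' r']
  have hFbd : ∀ q : M × ℝ, |locDisc μ D q.1 q.2| ^ p ≤ (N:ℝ) ^ p := fun q =>
    Real.rpow_le_rpow (abs_nonneg _) (hLbd _ _) hp0.le
  set g : M → ℝ := fun y' => ∫ r' in Set.Icc (0:ℝ) 1, |locDisc μ D y' r'| ^ p with hg
  have hgsm : StronglyMeasurable g :=
    MeasureTheory.StronglyMeasurable.integral_prod_right' (ν := volume.restrict (Icc (0:ℝ) 1))
      hFms.stronglyMeasurable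
  have hgnn : ∀ y', 0 ≤ g y' := fun y' => integral_nonneg (fun r' => hFnn (y', r'))
  have hInt1 : ∀ y' : M, IntegrableOn (fun r' => |locDisc μ D y' r'| ^ p) (Icc (0:ℝ) 1) := by
    intro y'
    refine Integrable.mono' (integrable_const ((N:ℝ)^p))
      ((hFms.comp measurable_prodMk_left).aestronglyMeasurable) ?_
    exact Filter.Eventually.of_forall fun r' => by
      rw [Real.norm_eq_abs, abs_of_nonneg (hFnn (y', r'))]; exact hFbd (y', r')
  have hgbd : ∀ y', g y' ≤ (N:ℝ)^p := by
    intro y'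
    calc g y' ≤ ∫ _r' in Icc (0:ℝ) 1, (N:ℝ)^p := by
          refine setIntegral_mono (hInt1 y')
            (integrableOn_const (by rw [Real.volume_Icc]; exact ENNReal.ofReal_ne_top))
            fun r' => hFbd (y', r')
      _ = (N:ℝ)^p := by
          rw [setIntegral_const]; rw [Real.volume_real_Icc]; norm_num
  have hgint : Integrable g μ := by
    refine Integrable.mono' (integrable_const ((N:ℝ)^p)) hgsm.aestronglyMeasurable ?_
    exact Filter.Eventually.of_forall fun y' => by
      rw [Real.norm_eq_abs, abs_of_nonneg (hgnn y')]; exact hgbd y'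
  have hA0 : 0 ≤ A := integral_nonneg hgnn
  have hterm1 : 0 ≤ 2 * (m:ℝ)^(2/p) * A^(1/p) := by positivity
  -- locate the piece containing y
  obtain ⟨j, hyj⟩ : ∃ j, y ∈ P j := by
    have hy : y ∈ ⋃ j, P j := by rw [hPcover]; exact mem_univ y
    exact mem_iUnion.mp hy
  have hbdd := (isCompact_univ.isBounded).subset (subset_univ (P j))
  have hdist : ∀ y' ∈ P j, dist y' y ≤ ε := fun y' hy' =>
    le_trans (Metric.dist_le_diam_of_mem hbdd hy' hyj) (hPdiam j)
  have hμPj : (μ (P j)).toReal = 1 / m := by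
    rw [hPvol j]; simp [ENNReal.toReal_div]
  -- the averaging machine
  have avg : ∀ a : ℝ, 0 ≤ a → a + ε ≤ 1 →
      (∀ y' ∈ P j, ∀ r' ∈ Set.Icc a (a+ε),
        |locDisc μ D y r| - 3*c₂*ε*N ≤ |locDisc μ D y' r'|) →
      |locDisc μ D y r| ≤ 2 * (m:ℝ) ^ (2/p) * A ^ (1/p) + 3*c₂*ε*N := by
    intro a ha ha1 hcomp
    set c := |locDisc μ D y r| - 3*c₂*ε*N with hc
    rcases le_or_gt c 0 with hc0 | hc0
    · linarith
    have hIsub : Set.Icc a (a+ε) ⊆ Set.Icc (0:ℝ) 1 := Set.Icc_subset_Icc ha ha1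
    have step1 : ∀ y' ∈ P j, c ^ p * ε ≤ g y' := by
      intro y' hy'
      have h1 : c ^ p * (volume (Set.Icc a (a+ε))).toReal
          ≤ ∫ r' in Set.Icc a (a+ε), |locDisc μ D y' r'| ^ p :=
        by have := setIntegral_ge_of_const_le measurableSet_Icc
            (by rw [Real.volume_Icc]; exact ENNReal.ofReal_ne_top)
            (fun r' hr' => Real.rpow_le_rpow hc0.le (hcomp y' hy' r' hr') hp0.le)
            ((hInt1 y').mono_set hIsub)
           rw [smul_eq_mul, mul_comm] at this; exact this
      have h2 : (∫ r' in Set.Icc a (a+ε), |locDisc μ D y' r'| ^ p) ≤ g y' :=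
        setIntegral_mono_set (hInt1 y')
          (Filter.Eventually.of_forall fun r' => hFnn (y', r'))
          (HasSubset.Subset.eventuallyLE hIsub)
      have h3 : (volume (Set.Icc a (a+ε))).toReal = ε := by
        rw [Real.volume_Icc]; rw [add_sub_cancel_left]; exact ENNReal.toReal_ofReal hε0.le
      rw [h3] at h1; linarith
    have step2 : c ^ p * ε * (1/(m:ℝ)) ≤ A := by
      have h1 : (c^p*ε) * (μ (P j)).toReal ≤ ∫ y' in P j, g y' ∂μ :=
        by have := setIntegral_ge_of_const_le (hPmeas j) (measure_ne_top μ _) step1 hgint.integrableOn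
           rw [smul_eq_mul, mul_comm] at this; exact this
      have h2 : (∫ y' in P j, g y' ∂μ) ≤ A :=
        setIntegral_le_integral hgint (Filter.Eventually.of_forall hgnn)
      rw [hμPj] at h1; linarith
    have hm1 : (1:ℝ) ≤ m := by exact_mod_cast hm0
    have hcp : (0:ℝ) < c^p := Real.rpow_pos_of_pos hc0 p
    have h4 : 1/(2*(m:ℝ)^2) ≤ ε * (1/m) := by
      have hmp : (0:ℝ) < m := by exact_mod_cast hm0
      rw [div_le_iff₀ (by positivity)]
      have he : ε * (1/m) * (2*(m:ℝ)^2) = 2*((m:ℝ)*ε) := by field_simp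
      rw [he]; linarith [hhalf]
    have h6 : c^p * (1/(2*(m:ℝ)^2)) ≤ A :=
      le_trans (mul_le_mul_of_nonneg_left h4 hcp.le) (by linarith [step2, mul_assoc (c^p) ε (1/(m:ℝ))])
    have hkey : c ^ p ≤ 2 * (m:ℝ)^2 * A := by
      have hm2 : (0:ℝ) < 2*(m:ℝ)^2 := by positivity
      calc c^p = (c^p * (1/(2*(m:ℝ)^2))) * (2*(m:ℝ)^2) := by field_simp
        _ ≤ A * (2*(m:ℝ)^2) := mul_le_mul_of_nonneg_right h6 hm2.le
        _ = 2*(m:ℝ)^2*A := by ring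
    have hfin : c ≤ 2 * (m:ℝ)^(2/p) * A^(1/p) := by
      have h7 : c = (c^p)^(1/p) := by
        rw [← Real.rpow_mul hc0.le, mul_one_div_cancel (ne_of_gt hp0), Real.rpow_one]
      have h8 : (c^p)^(1/p) ≤ (2*(m:ℝ)^2*A)^(1/p) :=
        Real.rpow_le_rpow hcp.le hkey (by positivity)
      have h9 : ((2*(m:ℝ)^2*A))^(1/p) = (2:ℝ)^(1/p) * ((m:ℝ)^2)^(1/p) * A^(1/p) := by
        rw [Real.mul_rpow (by positivity) hA0, Real.mul_rpow (by norm_num) (by positivity)]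
      have h10 : (((m:ℝ))^2)^(1/p) = (m:ℝ)^(2/p) := by
        rw [← Real.rpow_natCast (m:ℝ) 2, ← Real.rpow_mul (Nat.cast_nonneg m)]
        norm_num [div_eq_mul_inv]
      have h11 : (2:ℝ)^(1/p) ≤ 2 := by
        nth_rewrite 2 [show (2:ℝ) = (2:ℝ)^(1:ℝ) by rw [Real.rpow_one]]
        exact Real.rpow_le_rpow_of_exponent_le (by norm_num)
          (by rw [div_le_one hp0]; linarith)
      calc c = (c^p)^(1/p) := h7
        _ ≤ (2:ℝ)^(1/p) * ((m:ℝ)^2)^(1/p) * A^(1/p) := by rw [← h9]; exact h8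
        _ ≤ 2 * (m:ℝ)^(2/p) * A^(1/p) := by
            rw [h10]
            exact mul_le_mul_of_nonneg_right
              (mul_le_mul_of_nonneg_right h11 (Real.rpow_nonneg (Nat.cast_nonneg m) _))
              (Real.rpow_nonneg hA0 _)
    linarith
  -- rewrite the target's error term
  have htgt : 4 * c₂ * c₈ * (N:ℝ) * (m : ℝ) ^ (-(1:ℝ)/d) = 4*c₂*ε*N := by
    rw [hεdef]; ring
  rw [htgt]
  have hεc₂N : 0 ≤ c₂*ε*(N:ℝ) := by positivity
  rcases le_or_gt (locDisc μ D y r) 0 with hsign | hsign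
  · -- negative part
    rcases lt_or_ge r (2*ε) with hrb | hrb
    · -- boundary near 0
      have h1 : |locDisc μ D y r| ≤ (N:ℝ) * vol μ y r := by
        rw [abs_of_nonpos hsign]; unfold locDisc; simp only [neg_sub]
        linarith [cnt_nonneg y r]
      have h2 : vol μ y r ≤ c₂ * r := by
        have hb := hB y r 0
        rw [vol_zero μ y, sub_zero, sub_zero,
          abs_of_nonneg (vol_nonneg μ y r), abs_of_nonneg hr0] at hb
        exact hb
      have h3 : (N:ℝ) * vol μ y r ≤ (N:ℝ) * (c₂ * (2*ε)) := by
        refine mul_le_mul_of_nonneg_left ?_ (Nat.cast_nonneg N)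
        calc vol μ y r ≤ c₂*r := h2
          _ ≤ c₂*(2*ε) := mul_le_mul_of_nonneg_left hrb.le hc₂.le
      nlinarith [hterm1]
    · -- main estimate, interval below r
      have h := avg (r - 2*ε) (by linarith) (by linarith) ?_
      · nlinarith [hεc₂N]
      intro y' hy' r' hr'
      obtain ⟨hr'1, hr'2⟩ := hr'
      have hr'2' : r' ≤ r - ε := by linarith
      have hd1 : dist y' y ≤ ε := hdist y' hy'
      have hcnt : (∑ i : Fin N, (ball y' r').indicator (1:M→ℝ) (D i)) ≤
          ∑ i : Fin N, (ball y r).indicator (1:M→ℝ) (D i) :=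
        cnt_mono y' y r' r (by linarith)
      have hv1 : vol μ y r ≤ vol μ y' (r + ε) :=
        vol_mono_center μ r hε0.le (by rw [dist_comm]; exact hd1)
      have hv2 : vol μ y' (r+ε) - vol μ y' r' ≤ c₂ * (3*ε) := by
        have hb := hB y' (r+ε) r'
        have habs : |r + ε - r'| ≤ 3*ε := by
          rw [abs_le]; constructor <;> linarith
        calc vol μ y' (r+ε) - vol μ y' r' ≤ |vol μ y' (r+ε) - vol μ y' r'| := le_abs_self _
          _ ≤ c₂ * |r+ε-r'| := hb
          _ ≤ c₂ * (3*ε) := mul_le_mul_of_nonneg_left habs hc₂.le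
      have hNv : (N:ℝ) * vol μ y r - (N:ℝ) * vol μ y' r' ≤ (N:ℝ) * (c₂*(3*ε)) := by
        have hvv : vol μ y r - vol μ y' r' ≤ c₂*(3*ε) := by linarith
        calc (N:ℝ) * vol μ y r - (N:ℝ)*vol μ y' r' = (N:ℝ) * (vol μ y r - vol μ y' r') := by ring
          _ ≤ (N:ℝ) * (c₂*(3*ε)) := mul_le_mul_of_nonneg_left hvv (Nat.cast_nonneg N)
      have habs2 : -(locDisc μ D y' r') ≤ |locDisc μ D y' r'| := neg_le_abs _
      rw [abs_of_nonpos hsign]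
      unfold locDisc at *
      nlinarith [hcnt, hNv, habs2]
  · -- positive part
    rcases lt_or_ge (1 - 2*ε) r with hrb | hrb
    · -- boundary near 1
      have h1 : |locDisc μ D y r| ≤ (N:ℝ) * (1 - vol μ y r) := by
        rw [abs_of_pos hsign]; unfold locDisc
        have := cnt_le y r
        nlinarith [cnt_le y r]
      have h2 : 1 - vol μ y r ≤ c₂ * (1 - r) := by
        have hb := hB y 1 r
        rw [vol_one μ y] at hb
        have habs : |(1:ℝ) - r| = 1 - r := abs_of_nonneg (by linarith)
        rw [habs] at hb
        calc 1 - vol μ y r ≤ |1 - vol μ y r| := le_abs_self _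
          _ ≤ c₂ * (1-r) := hb
      have h3 : (N:ℝ) * (1 - vol μ y r) ≤ (N:ℝ) * (c₂ * (2*ε)) := by
        refine mul_le_mul_of_nonneg_left ?_ (Nat.cast_nonneg N)
        calc 1 - vol μ y r ≤ c₂*(1-r) := h2
          _ ≤ c₂*(2*ε) := mul_le_mul_of_nonneg_left (by linarith) hc₂.le
      nlinarith [hterm1]
    · -- main estimate, interval above r
      have h := avg (r + ε) (by linarith) (by linarith) ?_
      · nlinarith [hεc₂N]
      intro y' hy' r' hr'
      obtain ⟨hr'1, hr'2⟩ := hr'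
      have hr'2' : r' ≤ r + 2*ε := by linarith
      have hd1 : dist y' y ≤ ε := hdist y' hy'
      have hcnt : (∑ i : Fin N, (ball y r).indicator (1:M→ℝ) (D i)) ≤
          ∑ i : Fin N, (ball y' r').indicator (1:M→ℝ) (D i) := by
        refine cnt_mono y y' r r' ?_
        have : dist y y' ≤ ε := by rw [dist_comm]; exact hd1
        linarith
      have hv1 : vol μ y' r' ≤ vol μ y (r' + ε) :=
        vol_mono_center μ r' hε0.le hd1
      have hv2 : vol μ y (r'+ε) - vol μ y r ≤ c₂ * (3*ε) := by
        have hb := hB y (r'+ε) r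
        have habs : |r' + ε - r| ≤ 3*ε := by
          rw [abs_le]; constructor <;> linarith
        calc vol μ y (r'+ε) - vol μ y r ≤ |vol μ y (r'+ε) - vol μ y r| := le_abs_self _
          _ ≤ c₂ * |r'+ε-r| := hb
          _ ≤ c₂ * (3*ε) := mul_le_mul_of_nonneg_left habs hc₂.le
      have hNv : (N:ℝ) * vol μ y' r' - (N:ℝ) * vol μ y r ≤ (N:ℝ) * (c₂*(3*ε)) := by
        have hvv : vol μ y' r' - vol μ y r ≤ c₂*(3*ε) := by linarith
        calc (N:ℝ) * vol μ y' r' - (N:ℝ)*vol μ y r = (N:ℝ) * (vol μ y' r' - vol μ y r) := by ring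
          _ ≤ (N:ℝ) * (c₂*(3*ε)) := mul_le_mul_of_nonneg_left hvv (Nat.cast_nonneg N)
      have habs2 : locDisc μ D y' r' ≤ |locDisc μ D y' r'| := le_abs_self _
      rw [abs_of_pos hsign]
      unfold locDisc at *
      nlinarith [hcnt, hNv, habs2]
end
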